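/- (Pietsch-Domination type theorem) Let 1 ≤ p < ∞. A continuous n-linear operator T : X_1 × ⋯ × X_n → Y between Banach spaces is factorable strongly p-summing if and only if there exist a constant C ≥ 0 and a regular Borel probability measure μ on the closed unit ball B of the space of continuous n-linear functionals φ : X_1 × ⋯ × X_n → 𝕂, endowed with the topology of pointwise convergence (the weak-star topology under the identification of this space with the dual of the completed projective tensor product X_1 ⊗̂_π ⋯ ⊗̂_π X_n), such that for every m ∈ ℕ, all x_k^i ∈ X_k and all scalars λ^i (1 ≤ i ≤ m), ‖∑_{i=1}^m λ^i T(x_1^i, …, x_n^i)‖ ≤ C · (∫_B |∑_{i=1}^m λ^i φ(x_1^i, …, x_n^i)|^p dμ(φ))^{1/p}. -/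

import Mathlib

open scoped BigOperators
open MeasureTheory

noncomputable section

section Defs

variable (𝕜 : Type*) [RCLike 𝕜]

section Multi

variable {n : ℕ} {X : Fin n → Type*} {Y : Type*}
  [∀ k, NormedAddCommGroup (X k)] [∀ k, NormedSpace 𝕜 (X k)]
  [NormedAddCommGroup Y] [NormedSpace 𝕜 Y]

/-- `C` witnesses the defining inequality of factorable strongly `p`-summing
multilinear operators. -/
def FactStronglySummingBound (p : ℝ) (T : ContinuousMultilinearMap 𝕜 X Y) (C : ℝ) : Prop :=
  0 ≤ C ∧ ∀ (m₁ m₂ : ℕ) (x : Fin m₁ → Fin m₂ → (∀ k, X k)) (lam : Fin m₁ → Fin m₂ → 𝕜),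
    (∑ j, ‖∑ i, lam j i • T (x j i)‖ ^ p) ^ (1 / p) ≤
      C * ⨆ φ : {φ : ContinuousMultilinearMap 𝕜 X 𝕜 // ‖φ‖ ≤ 1},
        (∑ j, ‖∑ i, lam j i • φ.1 (x j i)‖ ^ p) ^ (1 / p)

/-- Factorable strongly `p`-summing continuous multilinear operators. -/
def FactStronglySumming (p : ℝ) (T : ContinuousMultilinearMap 𝕜 X Y) : Prop :=
  ∃ C, FactStronglySummingBound 𝕜 p T C

/-- The factorable strongly `p`-summing norm `‖T‖_{FSt,p}` (the least admissible constant). -/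
def fstMultiNorm (p : ℝ) (T : ContinuousMultilinearMap 𝕜 X Y) : ℝ :=
  sInf {C | FactStronglySummingBound 𝕜 p T C}

/-- Strongly `p`-summing continuous multilinear operators (Dimant). -/
def StronglySumming (p : ℝ) (T : ContinuousMultilinearMap 𝕜 X Y) : Prop :=
  ∃ C : ℝ, 0 ≤ C ∧ ∀ (m : ℕ) (x : Fin m → (∀ k, X k)),
    (∑ j, ‖T (x j)‖ ^ p) ^ (1 / p) ≤
      C * ⨆ φ : {φ : ContinuousMultilinearMap 𝕜 X 𝕜 // ‖φ‖ ≤ 1},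
        (∑ j, ‖φ.1 (x j)‖ ^ p) ^ (1 / p)

/-- Factorable `p`-dominated continuous multilinear operators. -/
def FactorablePDominated (p : ℝ) (T : ContinuousMultilinearMap 𝕜 X Y) : Prop :=
  ∃ C : ℝ, 0 ≤ C ∧ ∀ (m₁ m₂ : ℕ) (x : Fin m₁ → Fin m₂ → (∀ k, X k))
    (lam : Fin m₁ → Fin m₂ → 𝕜),
    (∑ j, ‖∑ i, lam j i • T (x j i)‖ ^ p) ^ (1 / p) ≤
      C * ⨆ φ : ∀ k, {f : X k →L[𝕜] 𝕜 // ‖f‖ ≤ 1},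
        (∑ j, ‖∑ i, lam j i • ∏ k, (φ k).1 (x j i k)‖ ^ p) ^ (1 / p)

/-- `p`-semi-integral continuous multilinear operators. -/
def PSemiIntegral (p : ℝ) (T : ContinuousMultilinearMap 𝕜 X Y) : Prop :=
  ∃ C : ℝ, 0 ≤ C ∧ ∀ (m : ℕ) (x : Fin m → (∀ k, X k)),
    (∑ j, ‖T (x j)‖ ^ p) ^ (1 / p) ≤
      C * ⨆ φ : ∀ k, {f : X k →L[𝕜] 𝕜 // ‖f‖ ≤ 1},
        (∑ j, ‖∏ k, (φ k).1 (x j k)‖ ^ p) ^ (1 / p)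

end Multi

section Poly

variable {X Y : Type*} [NormedAddCommGroup X] [NormedSpace 𝕜 X]
  [NormedAddCommGroup Y] [NormedSpace 𝕜 Y]

/-- `P` is a continuous `m`-homogeneous polynomial: the diagonal of a continuous
`m`-linear map. -/
def IsHomogPoly (m : ℕ) (P : X → Y) : Prop :=
  ∃ T : ContinuousMultilinearMap 𝕜 (fun _ : Fin m => X) Y, ∀ x, P x = T (fun _ => x)

/-- Sup norm of a (homogeneous polynomial) map on the closed unit ball. -/
def polyNorm (P : X → Y) : ℝ :=
  ⨆ x : {x : X // ‖x‖ ≤ 1}, ‖P x.1‖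

/-- `C` witnesses the defining inequality of factorable strongly `p`-summing
`m`-homogeneous polynomials. -/
def FactStronglySummingPolyBound (m : ℕ) (p : ℝ) (P : X → Y) (C : ℝ) : Prop :=
  0 ≤ C ∧ ∀ (m₁ m₂ : ℕ) (x : Fin m₁ → Fin m₂ → X) (lam : Fin m₁ → Fin m₂ → 𝕜),
    (∑ j, ‖∑ i, lam j i • P (x j i)‖ ^ p) ^ (1 / p) ≤
      C * ⨆ q : {q : X → 𝕜 // IsHomogPoly 𝕜 m q ∧ polyNorm q ≤ 1},
        (∑ j, ‖∑ i, lam j i • q.1 (x j i)‖ ^ p) ^ (1 / p)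

/-- Factorable strongly `p`-summing `m`-homogeneous polynomials. -/
def FactStronglySummingPoly (m : ℕ) (p : ℝ) (P : X → Y) : Prop :=
  IsHomogPoly 𝕜 m P ∧ ∃ C, FactStronglySummingPolyBound 𝕜 m p P C

/-- The factorable strongly `p`-summing norm `‖P‖_{FSt,p}` of a polynomial. -/
def fstPolyNorm (m : ℕ) (p : ℝ) (P : X → Y) : ℝ :=
  sInf {C | FactStronglySummingPolyBound 𝕜 m p P C}

/-- `C` witnesses the defining inequality of absolutely `p`-summing linear operators. -/
def AbsSummingBound (p : ℝ) (u : X →L[𝕜] Y) (C : ℝ) : Prop :=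
  0 ≤ C ∧ ∀ (m : ℕ) (x : Fin m → X),
    (∑ j, ‖u (x j)‖ ^ p) ^ (1 / p) ≤
      C * ⨆ φ : {φ : X →L[𝕜] 𝕜 // ‖φ‖ ≤ 1}, (∑ j, ‖φ.1 (x j)‖ ^ p) ^ (1 / p)

/-- Absolutely `p`-summing continuous linear operators. -/
def AbsolutelySumming (p : ℝ) (u : X →L[𝕜] Y) : Prop :=
  ∃ C, AbsSummingBound 𝕜 p u C

/-- The absolutely `p`-summing norm `π_p(u)` (the least admissible constant). -/
def piSummingNorm (p : ℝ) (u : X →L[𝕜] Y) : ℝ :=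
  sInf {C | AbsSummingBound 𝕜 p u C}

end Poly

end Defs

end
/-- The closed unit ball of the space of continuous `n`-linear functionals on
`X 1 × ⋯ × X n`, endowed (below) with the topology of pointwise convergence and its
Borel σ-algebra. -/
def MultBall (𝕜 : Type*) [RCLike 𝕜] {n : ℕ} (X : Fin n → Type*)
    [∀ k, NormedAddCommGroup (X k)] [∀ k, NormedSpace 𝕜 (X k)] : Type _ :=
  {φ : ContinuousMultilinearMap 𝕜 X 𝕜 // ‖φ‖ ≤ 1}

variable {𝕜 : Type*} [RCLike 𝕜] {n : ℕ} {X : Fin n → Type*}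
  [∀ k, NormedAddCommGroup (X k)] [∀ k, NormedSpace 𝕜 (X k)]

/-- The topology of pointwise convergence on the ball of multilinear functionals. -/
instance : TopologicalSpace (MultBall 𝕜 X) :=
  TopologicalSpace.induced
    (fun (φ : {φ : ContinuousMultilinearMap 𝕜 X 𝕜 // ‖φ‖ ≤ 1}) (x : ∀ k, X k) => φ.1 x)
    Pi.topologicalSpace

instance : MeasurableSpace (MultBall 𝕜 X) := borel _

instance : BorelSpace (MultBall 𝕜 X) := ⟨rfl⟩

section Topo

variable {𝕜 : Type*} [RCLike 𝕜] {n : ℕ} {X : Fin n → Type*}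
  [∀ k, NormedAddCommGroup (X k)] [∀ k, NormedSpace 𝕜 (X k)]

namespace MultBall

/-- The evaluation embedding into the product space. -/
def ev : MultBall 𝕜 X → ((∀ k, X k) → 𝕜) := fun φ x => φ.1 x

lemma isInducing_ev : Topology.IsInducing (ev (𝕜 := 𝕜) (X := X)) := ⟨rfl⟩

lemma injective_ev : Function.Injective (ev (𝕜 := 𝕜) (X := X)) := by
  intro φ ψ h
  apply Subtype.ext
  apply ContinuousMultilinearMap.ext
  intro x
  exact congrFun h x

lemma isEmbedding_ev : Topology.IsEmbedding (ev (𝕜 := 𝕜) (X := X)) :=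
  ⟨isInducing_ev, injective_ev⟩

instance : T2Space (MultBall 𝕜 X) := isEmbedding_ev.t2Space

instance : Nonempty (MultBall 𝕜 X) := ⟨⟨0, by simp⟩⟩

lemma continuous_eval (x : ∀ k, X k) :
    Continuous (fun φ : MultBall 𝕜 X => φ.1 x) :=
  (continuous_apply x).comp isInducing_ev.continuous

open Function in
/-- The range of the evaluation embedding. -/
lemma range_ev : Set.range (ev (𝕜 := 𝕜) (X := X)) =
    {g : (∀ k, X k) → 𝕜 |
      (∀ (x : ∀ k, X k) (k : Fin n) (a b : X k),
          g (update x k (a + b)) = g (update x k a) + g (update x k b)) ∧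
      (∀ (x : ∀ k, X k) (k : Fin n) (c : 𝕜) (a : X k),
          g (update x k (c • a)) = c • g (update x k a)) ∧
      (∀ x : ∀ k, X k, ‖g x‖ ≤ ∏ k, ‖x k‖)} := by
  ext g
  constructor
  · rintro ⟨φ, rfl⟩
    refine ⟨fun x k a b => ?_, fun x k c a => ?_, fun x => ?_⟩
    · exact φ.1.toMultilinearMap.map_update_add x k a b
    · exact φ.1.toMultilinearMap.map_update_smul x k c a
    · simpa [ev] using φ.1.le_of_opNorm_le φ.2 x
  · rintro ⟨h1, h2, h3⟩
    set L : MultilinearMap 𝕜 X 𝕜 :=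
      { toFun := g
        map_update_add' := by
          intro inst x k a b
          rw [Subsingleton.elim inst (instDecidableEqFin n)]
          exact h1 x k a b
        map_update_smul' := by
          intro inst x k c a
          rw [Subsingleton.elim inst (instDecidableEqFin n)]
          exact h2 x k c a }
    refine ⟨⟨L.mkContinuous 1 (fun x => by rw [one_mul]; exact h3 x), ?_⟩, rfl⟩
    exact L.mkContinuous_norm_le zero_le_one (fun x => by rw [one_mul]; exact h3 x)

instance : CompactSpace (MultBall 𝕜 X) := by
  rw [← isCompact_univ_iff, isEmbedding_ev.isCompact_iff, Set.image_univ, range_ev]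
  have hT : IsCompact {g : (∀ k, X k) → 𝕜 | ∀ x, g x ∈ Metric.closedBall (0 : 𝕜) (∏ k, ‖x k‖)} := by
    have := isCompact_univ_pi (fun x : ∀ k, X k =>
      isCompact_closedBall (0 : 𝕜) (∏ k, ‖x k‖))
    simpa [Set.pi, Set.mem_univ] using this
  apply hT.of_isClosed_subset
  · simp only [Set.setOf_and, Set.setOf_forall]
    refine IsClosed.inter ?_ (IsClosed.inter ?_ ?_)
    · exact isClosed_iInter fun x => isClosed_iInter fun k => isClosed_iInter fun a =>
        isClosed_iInter fun b => isClosed_eq (continuous_apply _)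
          (Continuous.add (continuous_apply _) (continuous_apply _))
    · exact isClosed_iInter fun x => isClosed_iInter fun k => isClosed_iInter fun c =>
        isClosed_iInter fun a => isClosed_eq (continuous_apply _)
          ((continuous_apply _).const_smul c)
    · exact isClosed_iInter fun x => isClosed_le
        ((continuous_apply x).norm) continuous_const
  · rintro g ⟨-, -, h3⟩ x
    simpa [Metric.mem_closedBall, dist_eq_norm] using h3 x

end MultBall

end Topo
section RMK
set_option linter.unusedSectionVars false
noncomputable section

open scoped NNReal ENNReal
open TopologicalSpace Set

namespace PietschRMK

variable {B : Type*} [TopologicalSpace B] [CompactSpace B] [T2Space B]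

/-- Test functions for the Riesz content of a set `K`. -/
def testSet (K : Set B) : Set C(B, ℝ) := {f | (∀ x, 0 ≤ f x) ∧ ∀ x ∈ K, 1 ≤ f x}

lemma one_mem_testSet (K : Set B) : (1 : C(B, ℝ)) ∈ testSet K :=
  ⟨fun _ => zero_le_one, fun _ _ => le_refl 1⟩

variable (Λ : C(B, ℝ) →L[ℝ] ℝ)

/-- The Riesz content function. -/
def lamK (K : Set B) : ℝ := sInf (Λ '' testSet K)

variable (hΛ : ∀ f : C(B, ℝ), (∀ x, 0 ≤ f x) → 0 ≤ Λ f)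

include hΛ in
lemma monoΛ {f g : C(B, ℝ)} (h : ∀ x, f x ≤ g x) : Λ f ≤ Λ g := by
  have h0 := hΛ (g - f) (fun x => by simpa using h x)
  rw [map_sub] at h0
  linarith


include hΛ in
lemma bddBelow_image (K : Set B) : BddBelow (Λ '' testSet K) := by
  refine ⟨0, ?_⟩
  rintro a ⟨f, hf, rfl⟩
  exact hΛ f hf.1

lemma image_nonempty (K : Set B) : (Λ '' testSet K).Nonempty :=
  ⟨Λ 1, 1, one_mem_testSet K, rfl⟩

include hΛ in
lemma lamK_nonneg (K : Set B) : 0 ≤ lamK Λ K :=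
  Real.sInf_nonneg (by rintro a ⟨f, hf, rfl⟩; exact hΛ f hf.1)

include hΛ in
lemma lamK_le {K : Set B} {f : C(B, ℝ)} (hf : f ∈ testSet K) : lamK Λ K ≤ Λ f :=
  csInf_le (bddBelow_image Λ hΛ K) ⟨f, hf, rfl⟩

lemma exists_test (K : Set B) {δ : ℝ} (hδ : 0 < δ) :
    ∃ f ∈ testSet K, Λ f < lamK Λ K + δ := by
  obtain ⟨a, ⟨f, hf, rfl⟩, ha⟩ := Real.lt_sInf_add_pos (image_nonempty Λ K) hδ
  exact ⟨f, hf, ha⟩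

include hΛ in
lemma lamK_mono {K₁ K₂ : Set B} (h : K₁ ⊆ K₂) : lamK Λ K₁ ≤ lamK Λ K₂ := by
  apply csInf_le_csInf (bddBelow_image Λ hΛ K₁) (image_nonempty Λ K₂)
  apply Set.image_mono
  rintro f ⟨h1, h2⟩
  exact ⟨h1, fun x hx => h2 x (h hx)⟩

include hΛ in
lemma lamK_union_le (K₁ K₂ : Set B) :
    lamK Λ (K₁ ∪ K₂) ≤ lamK Λ K₁ + lamK Λ K₂ := by
  refine le_of_forall_pos_le_add (fun δ hδ => ?_)
  obtain ⟨f₁, hf₁, hΛ₁⟩ := exists_test Λ K₁ (half_pos hδ)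
  obtain ⟨f₂, hf₂, hΛ₂⟩ := exists_test Λ K₂ (half_pos hδ)
  have hmem : f₁ + f₂ ∈ testSet (K₁ ∪ K₂) := by
    constructor
    · intro x; simpa using add_nonneg (hf₁.1 x) (hf₂.1 x)
    · rintro x (hx | hx)
      · simpa using le_add_of_le_of_nonneg (hf₁.2 x hx) (hf₂.1 x)
      · simpa using le_add_of_nonneg_of_le (hf₁.1 x) (hf₂.2 x hx)
  calc lamK Λ (K₁ ∪ K₂) ≤ Λ (f₁ + f₂) := lamK_le Λ hΛ hmem
    _ = Λ f₁ + Λ f₂ := map_add _ _ _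
    _ ≤ lamK Λ K₁ + δ / 2 + (lamK Λ K₂ + δ / 2) := by linarith
    _ = lamK Λ K₁ + lamK Λ K₂ + δ := by ring

include hΛ in
lemma lamK_union_disjoint {K₁ K₂ : Set B} (h₁ : IsClosed K₁) (h₂ : IsClosed K₂)
    (hd : Disjoint K₁ K₂) :
    lamK Λ (K₁ ∪ K₂) = lamK Λ K₁ + lamK Λ K₂ := by
  refine le_antisymm (lamK_union_le Λ hΛ K₁ K₂) ?_
  refine le_of_forall_pos_le_add (fun δ hδ => ?_)
  obtain ⟨f, hf, hΛf⟩ := exists_test Λ (K₁ ∪ K₂) hδ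
  obtain ⟨u, hu2, hu1, hu01⟩ := exists_continuous_zero_one_of_isClosed h₂ h₁ hd.symm
  have hmem₁ : f * u ∈ testSet K₁ := by
    constructor
    · intro x; exact mul_nonneg (hf.1 x) (hu01 x).1
    · intro x hx
      have : u x = 1 := hu1 hx
      simp only [ContinuousMap.mul_apply, this, mul_one]
      exact hf.2 x (Or.inl hx)
  have hmem₂ : f * (1 - u) ∈ testSet K₂ := by
    constructor
    · intro x
      simp only [ContinuousMap.mul_apply, ContinuousMap.sub_apply, ContinuousMap.one_apply]
      exact mul_nonneg (hf.1 x) (by linarith [(hu01 x).2])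
    · intro x hx
      have : u x = 0 := hu2 hx
      simp only [ContinuousMap.mul_apply, ContinuousMap.sub_apply, ContinuousMap.one_apply, this]
      simpa using hf.2 x (Or.inr hx)
  have hsum : f * u + f * (1 - u) = f := by ring
  calc lamK Λ K₁ + lamK Λ K₂ ≤ Λ (f * u) + Λ (f * (1 - u)) :=
        add_le_add (lamK_le Λ hΛ hmem₁) (lamK_le Λ hΛ hmem₂)
    _ = Λ (f * u + f * (1 - u)) := (map_add _ _ _).symm
    _ = Λ f := by rw [hsum]
    _ ≤ lamK Λ (K₁ ∪ K₂) + δ := hΛf.le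

/-- The Riesz content as a `Content`. -/
def rieszC : MeasureTheory.Content B where
  toFun K := (lamK Λ K.1).toNNReal
  mono' K₁ K₂ h := Real.toNNReal_le_toNNReal (lamK_mono Λ hΛ h)
  sup_disjoint' K₁ K₂ hd hc₁ hc₂ := by
    have h : lamK Λ (K₁.1 ∪ K₂.1) = lamK Λ K₁.1 + lamK Λ K₂.1 :=
      lamK_union_disjoint Λ hΛ K₁.2.isClosed K₂.2.isClosed hd
    show (lamK Λ (K₁.1 ∪ K₂.1)).toNNReal = _
    rw [h, Real.toNNReal_add (lamK_nonneg Λ hΛ _) (lamK_nonneg Λ hΛ _)]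
  sup_le' K₁ K₂ := by
    have h := lamK_union_le Λ hΛ K₁.1 K₂.1
    show (lamK Λ (K₁.1 ∪ K₂.1)).toNNReal ≤ _
    calc (lamK Λ (K₁.1 ∪ K₂.1)).toNNReal ≤ (lamK Λ K₁.1 + lamK Λ K₂.1).toNNReal :=
          Real.toNNReal_le_toNNReal h
      _ = (lamK Λ K₁.1).toNNReal + (lamK Λ K₂.1).toNNReal :=
          Real.toNNReal_add (lamK_nonneg Λ hΛ _) (lamK_nonneg Λ hΛ _)

variable [MeasurableSpace B] [BorelSpace B]

/-- The Riesz measure associated to a positive normalized functional. -/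
def rmkMeasure : MeasureTheory.Measure B := (rieszC Λ hΛ).measure

instance : (rmkMeasure Λ hΛ).Regular := by
  unfold rmkMeasure
  infer_instance

variable (hΛ1 : Λ 1 = 1)

include hΛ hΛ1 in
lemma lamK_univ : lamK Λ (Set.univ : Set B) = 1 := by
  refine le_antisymm ?_ ?_
  · have := lamK_le Λ hΛ (one_mem_testSet (Set.univ : Set B))
    rwa [hΛ1] at this
  · refine le_csInf (image_nonempty Λ _) ?_
    rintro a ⟨f, hf, rfl⟩
    calc (1 : ℝ) = Λ 1 := hΛ1.symm
      _ ≤ Λ f := monoΛ Λ hΛ (fun x => hf.2 x (Set.mem_univ x))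

include hΛ hΛ1 in
lemma rmkMeasure_univ : rmkMeasure Λ hΛ Set.univ = 1 := by
  have hmeas : rmkMeasure Λ hΛ Set.univ = (rieszC Λ hΛ).outerMeasure Set.univ :=
    (rieszC Λ hΛ).measure_apply MeasurableSet.univ
  rw [hmeas, (rieszC Λ hΛ).outerMeasure_of_isOpen Set.univ isOpen_univ]
  have h1 : (rieszC Λ hΛ).innerContent ⟨Set.univ, isOpen_univ⟩ ≤
      (rieszC Λ hΛ) ⟨Set.univ, isCompact_univ⟩ :=
    (rieszC Λ hΛ).innerContent_le _ _ (subset_refl _)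
  have h2 : ((rieszC Λ hΛ) ⟨Set.univ, isCompact_univ⟩ : ℝ≥0∞) ≤
      (rieszC Λ hΛ).innerContent ⟨Set.univ, isOpen_univ⟩ :=
    (rieszC Λ hΛ).le_innerContent _ _ (subset_refl _)
  have h3 : ((rieszC Λ hΛ) ⟨Set.univ, isCompact_univ⟩ : ℝ≥0∞) = 1 := by
    show ((lamK Λ (Set.univ : Set B)).toNNReal : ℝ≥0∞) = 1
    rw [lamK_univ Λ hΛ hΛ1]
    simp
  exact le_antisymm (by rw [← h3]; exact h1) (by rw [← h3]; exact h2)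

include hΛ hΛ1 in
lemma isProbability_rmkMeasure : MeasureTheory.IsProbabilityMeasure (rmkMeasure Λ hΛ) :=
  ⟨rmkMeasure_univ Λ hΛ hΛ1⟩

end PietschRMK

end
end RMK
section Stair
set_option linter.unusedSectionVars false
noncomputable section

open scoped NNReal ENNReal
open TopologicalSpace Set MeasureTheory Finset

namespace PietschRMK

variable {B : Type*} [TopologicalSpace B] [CompactSpace B] [T2Space B]
  [MeasurableSpace B] [BorelSpace B]
  (Λ : C(B, ℝ) →L[ℝ] ℝ)
  (hΛ : ∀ f : C(B, ℝ), (∀ x, 0 ≤ f x) → 0 ≤ Λ f) (hΛ1 : Λ 1 = 1)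

include hΛ hΛ1 in
theorem le_integral (g : C(B, ℝ)) (hg : ∀ x, 0 ≤ g x) :
    Λ g ≤ ∫ x, g x ∂(rmkMeasure Λ hΛ) := by
  set μ := rmkMeasure Λ hΛ with hμ
  haveI : IsProbabilityMeasure μ := isProbability_rmkMeasure Λ hΛ hΛ1
  have gint : Integrable (fun x => g x) μ :=
    g.continuous.integrable_of_hasCompactSupport (HasCompactSupport.of_compactSpace _)
  -- main estimate for every ε ∈ (0, 1]
  have key : ∀ ε : ℝ, 0 < ε → ε ≤ 1 → Λ g ≤ (∫ x, g x ∂μ) + 2 * ε := by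
    intro ε hε hε1
    set N : ℕ := ⌈‖g‖ / ε⌉₊ + 1 with hN
    have hNpos : 0 < (N : ℝ) := by positivity
    have hgN : ∀ x : B, g x ≤ (N : ℝ) * ε := by
      intro x
      calc g x ≤ ‖g x‖ := le_abs_self _
        _ ≤ ‖g‖ := g.norm_coe_le_norm x
        _ = ‖g‖ / ε * ε := (div_mul_cancel₀ _ hε.ne').symm
        _ ≤ (N : ℝ) * ε := by
            apply mul_le_mul_of_nonneg_right _ hε.le
            calc ‖g‖ / ε ≤ (⌈‖g‖ / ε⌉₊ : ℝ) := Nat.le_ceil _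
              _ ≤ (N : ℝ) := by exact_mod_cast Nat.le_succ _
    set K : ℕ → Set B := fun i => {x | (i + 1 : ℝ) * ε ≤ g x} with hK
    have hKclosed : ∀ i, IsClosed (K i) := fun i =>
      isClosed_le continuous_const g.continuous
    have hKcomp : ∀ i, IsCompact (K i) := fun i => (hKclosed i).isCompact
    have hchoice : ∀ i : ℕ, ∃ f ∈ testSet (K i), Λ f < lamK Λ (K i) + ε / N :=
      fun i => exists_test Λ (K i) (by positivity)
    choose f hf hΛf using hchoice
    have hfloor : ∀ x : B, 0 ≤ g x / ε := fun x => div_nonneg (hg x) hε.le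
    -- membership in K i in terms of the floor of g x / ε
    have hmemK : ∀ (x : B) (i : ℕ), x ∈ K i ↔ i < ⌊g x / ε⌋₊ := by
      intro x i
      rw [hK]
      simp only [Set.mem_setOf_eq]
      rw [Nat.lt_iff_add_one_le, Nat.le_floor_iff (hfloor x)]
      rw [le_div_iff₀ hε]
      push_cast
      tauto
    -- pointwise upper bound by the test functions
    have hup : ∀ x : B, g x ≤ ε * (1 + ∑ i ∈ Finset.range N, f i x) := by
      intro x
      set M : ℕ := ⌊g x / ε⌋₊ with hM
      set m : ℕ := min N M with hm
      have h1 : (m : ℝ) ≤ ∑ i ∈ Finset.range N, f i x := by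
        calc (m : ℝ) = ∑ _i ∈ Finset.range m, (1 : ℝ) := by simp
          _ ≤ ∑ i ∈ Finset.range m, f i x := Finset.sum_le_sum (fun i hi => by
              apply (hf i).2 x
              rw [hmemK]
              exact lt_of_lt_of_le (Finset.mem_range.mp hi) (min_le_right _ _))
          _ ≤ ∑ i ∈ Finset.range N, f i x := Finset.sum_le_sum_of_subset_of_nonneg
              (Finset.range_subset_range.mpr (min_le_left _ _)) (fun i _ _ => (hf i).1 x)
      have h2 : g x ≤ ε * (1 + m) := by
        rcases lt_or_ge M N with hMN | hMN
        · have hmm : m = M := min_eq_right hMN.le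
          have hlt : g x / ε < M + 1 := Nat.lt_floor_add_one _
          rw [div_lt_iff₀ hε] at hlt
          rw [hmm]; nlinarith
        · have hmm : m = N := min_eq_left hMN
          rw [hmm]
          have := hgN x
          nlinarith
      calc g x ≤ ε * (1 + m) := h2
        _ ≤ ε * (1 + ∑ i ∈ Finset.range N, f i x) := by nlinarith
    -- apply Λ
    have hstep1 : Λ g ≤ ε * (1 + ∑ i ∈ Finset.range N, Λ (f i)) := by
      have hmono := monoΛ Λ hΛ (f := g) (g := ε • (1 + ∑ i ∈ Finset.range N, f i)) (fun x => by
        simp only [ContinuousMap.smul_apply, ContinuousMap.add_apply, ContinuousMap.one_apply,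
          ContinuousMap.sum_apply, smul_eq_mul]
        exact hup x)
      calc Λ g ≤ Λ (ε • (1 + ∑ i ∈ Finset.range N, f i)) := hmono
        _ = ε * (1 + ∑ i ∈ Finset.range N, Λ (f i)) := by
            rw [_root_.map_smul, map_add, _root_.map_sum, hΛ1, smul_eq_mul]
    have hstep2 : ∑ i ∈ Finset.range N, Λ (f i) ≤ (∑ i ∈ Finset.range N, lamK Λ (K i)) + ε := by
      calc ∑ i ∈ Finset.range N, Λ (f i)
          ≤ ∑ i ∈ Finset.range N, (lamK Λ (K i) + ε / N) :=
            Finset.sum_le_sum (fun i _ => (hΛf i).le)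
        _ = (∑ i ∈ Finset.range N, lamK Λ (K i)) + N * (ε / N) := by
            rw [Finset.sum_add_distrib, Finset.sum_const, Finset.card_range, nsmul_eq_mul]
        _ = (∑ i ∈ Finset.range N, lamK Λ (K i)) + ε := by
            rw [mul_div_cancel₀ _ hNpos.ne']
    -- measure-theoretic lower bound
    have hcont : ∀ i : ℕ, lamK Λ (K i) ≤ (μ (K i)).toReal := by
      intro i
      have hle : (((lamK Λ (K i)).toNNReal : ℝ≥0∞)) ≤ μ (K i) := by
        have h1 := (rieszC Λ hΛ).le_outerMeasure_compacts ⟨K i, hKcomp i⟩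
        have h2 : μ (K i) = (rieszC Λ hΛ).outerMeasure (K i) :=
          (rieszC Λ hΛ).measure_apply (hKclosed i).measurableSet
        rw [h2]
        exact h1
      calc lamK Λ (K i) = ((lamK Λ (K i)).toNNReal : ℝ) :=
            (Real.coe_toNNReal _ (lamK_nonneg Λ hΛ _)).symm
        _ = (((lamK Λ (K i)).toNNReal : ℝ≥0∞)).toReal := by simp
        _ ≤ (μ (K i)).toReal := ENNReal.toReal_mono (measure_ne_top μ _) hle
    have hind : ∀ x : B, (∑ i ∈ Finset.range N, (K i).indicator (fun _ => ε) x) ≤ g x := by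
      intro x
      classical
      set M : ℕ := ⌊g x / ε⌋₊ with hM
      set m : ℕ := min N M with hm
      have hfil : (Finset.range N).filter (fun i => x ∈ K i) = Finset.range m := by
        ext j
        simp only [Finset.mem_filter, Finset.mem_range, hm, lt_min_iff, hmemK x j, hM]
      have hsum : (∑ i ∈ Finset.range N, (K i).indicator (fun _ => ε) x) = m * ε := by
        calc (∑ i ∈ Finset.range N, (K i).indicator (fun _ => ε) x)
            = ∑ i ∈ Finset.range N, (if x ∈ K i then ε else 0) := by
              refine Finset.sum_congr rfl (fun i _ => ?_)
              simp [Set.indicator_apply]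
          _ = ∑ i ∈ (Finset.range N).filter (fun i => x ∈ K i), ε :=
              (Finset.sum_filter _ _).symm
          _ = m * ε := by rw [hfil, Finset.sum_const, Finset.card_range, nsmul_eq_mul]
      rw [hsum]
      have hm2 : (m : ℝ) ≤ M := by exact_mod_cast min_le_right N M
      have hM2 : (M : ℝ) * ε ≤ g x := by
        have := Nat.floor_le (hfloor x)
        calc (M : ℝ) * ε ≤ g x / ε * ε := mul_le_mul_of_nonneg_right this hε.le
          _ = g x := div_mul_cancel₀ _ hε.ne'
      nlinarith
    have hinti : ∀ i : ℕ, Integrable ((K i).indicator (fun _ => ε)) μ :=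
      fun i => (integrable_const ε).indicator (hKclosed i).measurableSet
    have hintsum : ∑ i ∈ Finset.range N, ε * (μ (K i)).toReal ≤ ∫ x, g x ∂μ := by
      have h1 : ∫ x, (∑ i ∈ Finset.range N, (K i).indicator (fun _ => ε) x) ∂μ
          = ∑ i ∈ Finset.range N, ε * (μ (K i)).toReal := by
        rw [integral_finset_sum _ (fun i _ => hinti i)]
        refine Finset.sum_congr rfl (fun i _ => ?_)
        rw [integral_indicator_const ε (hKclosed i).measurableSet, smul_eq_mul, mul_comm, measureReal_def]
      rw [← h1]
      exact integral_mono (integrable_finset_sum _ (fun i _ => hinti i)) gint hind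
    -- put everything together
    have hfin : ε * ∑ i ∈ Finset.range N, lamK Λ (K i) ≤ ∫ x, g x ∂μ := by
      calc ε * ∑ i ∈ Finset.range N, lamK Λ (K i)
          = ∑ i ∈ Finset.range N, ε * lamK Λ (K i) := Finset.mul_sum _ _ _
        _ ≤ ∑ i ∈ Finset.range N, ε * (μ (K i)).toReal :=
            Finset.sum_le_sum (fun i _ => mul_le_mul_of_nonneg_left (hcont i) hε.le)
        _ ≤ ∫ x, g x ∂μ := hintsum
    calc Λ g ≤ ε * (1 + ∑ i ∈ Finset.range N, Λ (f i)) := hstep1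
      _ ≤ ε * (1 + ((∑ i ∈ Finset.range N, lamK Λ (K i)) + ε)) := by
          apply mul_le_mul_of_nonneg_left _ hε.le
          linarith
      _ = ε * ∑ i ∈ Finset.range N, lamK Λ (K i) + (ε + ε * ε) := by ring
      _ ≤ (∫ x, g x ∂μ) + 2 * ε := by nlinarith
  -- conclude
  refine le_of_forall_pos_le_add (fun δ hδ => ?_)
  have hε : 0 < min (δ / 2) 1 := lt_min (by linarith) one_pos
  calc Λ g ≤ (∫ x, g x ∂μ) + 2 * min (δ / 2) 1 := key _ hε (min_le_right _ _)
    _ ≤ (∫ x, g x ∂μ) + δ := by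
        have : 2 * min (δ / 2) 1 ≤ 2 * (δ / 2) :=
          mul_le_mul_of_nonneg_left (min_le_left _ _) (by norm_num)
        linarith

end PietschRMK

end
end Stair
section MainProof
set_option linter.unusedSectionVars false
set_option maxHeartbeats 1000000
noncomputable section

open MeasureTheory Finset Set

namespace PietschMain

variable {𝕜 : Type*} [RCLike 𝕜] {n : ℕ} {X : Fin n → Type*}
  [∀ k, NormedAddCommGroup (X k)] [∀ k, NormedSpace 𝕜 (X k)]
  {Y : Type*} [NormedAddCommGroup Y] [NormedSpace 𝕜 Y]

/-- The double sum of `p`-th powers appearing in the definitions. -/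
def blockVal (p : ℝ) {W : Type*} [NormedAddCommGroup W] [Module 𝕜 W]
    (G : (∀ k, X k) → W) (m₁ m₂ : ℕ)
    (x : Fin m₁ → Fin m₂ → ∀ k, X k) (lam : Fin m₁ → Fin m₂ → 𝕜) : ℝ :=
  ∑ j, ‖∑ i, lam j i • G (x j i)‖ ^ p

lemma blockVal_nonneg (p : ℝ) {W : Type*} [NormedAddCommGroup W] [Module 𝕜 W]
    (G : (∀ k, X k) → W) (m₁ m₂ : ℕ) (x : Fin m₁ → Fin m₂ → ∀ k, X k)
    (lam : Fin m₁ → Fin m₂ → 𝕜) : 0 ≤ blockVal p G m₁ m₂ x lam :=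
  Finset.sum_nonneg fun j _ => Real.rpow_nonneg (norm_nonneg _) p

/-- Concatenation of the `x`-data of two blocks. -/
def catx {m₁a m₂a m₁b m₂b : ℕ} (xa : Fin m₁a → Fin m₂a → ∀ k, X k)
    (xb : Fin m₁b → Fin m₂b → ∀ k, X k) :
    Fin (m₁a + m₁b) → Fin (m₂a + m₂b) → ∀ k, X k :=
  Fin.append (fun ja => Fin.append (xa ja) 0) (fun jb => Fin.append 0 (xb jb))

/-- Concatenation of the scalar data of two blocks, scaled by `c` resp. `d`. -/
def catlam {m₁a m₂a m₁b m₂b : ℕ} (c d : 𝕜) (lama : Fin m₁a → Fin m₂a → 𝕜)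
    (lamb : Fin m₁b → Fin m₂b → 𝕜) :
    Fin (m₁a + m₁b) → Fin (m₂a + m₂b) → 𝕜 :=
  Fin.append (fun ja => Fin.append (fun i => c * lama ja i) 0)
    (fun jb => Fin.append 0 (fun i => d * lamb jb i))

lemma blockVal_cat (p : ℝ) {W : Type*} [NormedAddCommGroup W] [NormedSpace 𝕜 W]
    (G : (∀ k, X k) → W) {m₁a m₂a m₁b m₂b : ℕ}
    (xa : Fin m₁a → Fin m₂a → ∀ k, X k) (xb : Fin m₁b → Fin m₂b → ∀ k, X k)
    (lama : Fin m₁a → Fin m₂a → 𝕜) (lamb : Fin m₁b → Fin m₂b → 𝕜) (c d : 𝕜) :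
    blockVal p G (m₁a + m₁b) (m₂a + m₂b) (catx xa xb) (catlam c d lama lamb) =
      ‖c‖ ^ p * blockVal p G m₁a m₂a xa lama +
      ‖d‖ ^ p * blockVal p G m₁b m₂b xb lamb := by
  unfold blockVal catx catlam
  rw [Fin.sum_univ_add]
  congr 1
  · rw [Finset.mul_sum]
    refine Finset.sum_congr rfl (fun ja _ => ?_)
    have hinner : (∑ i, Fin.append (fun i => c * lama ja i) 0 i •
        G (Fin.append (xa ja) (0 : Fin m₂b → ∀ k, X k) i)) =
        c • ∑ i, lama ja i • G (xa ja i) := by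
      rw [Fin.sum_univ_add, Finset.smul_sum]
      have h2 : ∀ ib : Fin m₂b, (Fin.append (fun i => c * lama ja i) (0 : Fin m₂b → 𝕜)
          (Fin.natAdd m₂a ib)) • G (Fin.append (xa ja) (0 : Fin m₂b → ∀ k, X k)
            (Fin.natAdd m₂a ib)) = 0 := by
        intro ib
        rw [Fin.append_right]
        simp
      rw [Finset.sum_congr rfl (fun ib _ => h2 ib), Finset.sum_const, smul_zero, add_zero]
      refine Finset.sum_congr rfl (fun ia _ => ?_)
      rw [Fin.append_left, Fin.append_left, mul_smul]
    rw [Fin.append_left, Fin.append_left]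
    rw [hinner, norm_smul, Real.mul_rpow (norm_nonneg c) (norm_nonneg _)]
  · rw [Finset.mul_sum]
    refine Finset.sum_congr rfl (fun jb _ => ?_)
    have hinner : (∑ i, Fin.append (0 : Fin m₂a → 𝕜) (fun i => d * lamb jb i) i •
        G (Fin.append (0 : Fin m₂a → ∀ k, X k) (xb jb) i)) =
        d • ∑ i, lamb jb i • G (xb jb i) := by
      rw [Fin.sum_univ_add, Finset.smul_sum]
      have h2 : ∀ ia : Fin m₂a, (Fin.append (0 : Fin m₂a → 𝕜) (fun i => d * lamb jb i)
          (Fin.castAdd m₂b ia)) • G (Fin.append (0 : Fin m₂a → ∀ k, X k) (xb jb)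
            (Fin.castAdd m₂b ia)) = 0 := by
        intro ia
        rw [Fin.append_left]
        simp
      rw [Finset.sum_congr rfl (fun ia _ => h2 ia), Finset.sum_const, smul_zero, zero_add]
      refine Finset.sum_congr rfl (fun ib _ => ?_)
      rw [Fin.append_right, Fin.append_right, mul_smul]
    rw [Fin.append_right, Fin.append_right]
    rw [hinner, norm_smul, Real.mul_rpow (norm_nonneg d) (norm_nonneg _)]


section Cone

variable [∀ k, CompleteSpace (X k)]
variable (p : ℝ) (hp : 0 < p) (T : ContinuousMultilinearMap 𝕜 X Y) (C : ℝ)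

/-- The `φ`-side block sum as a continuous function on the ball. -/
def SS (m₁ m₂ : ℕ) (x : Fin m₁ → Fin m₂ → ∀ k, X k) (lam : Fin m₁ → Fin m₂ → 𝕜) :
    C(MultBall 𝕜 X, ℝ) :=
  ⟨fun φ => blockVal p (fun v => φ.1 v) m₁ m₂ x lam, by
    apply continuous_finset_sum
    intro j _
    apply Continuous.rpow_const
    · apply Continuous.norm
      apply continuous_finset_sum
      intro i _
      exact (MultBall.continuous_eval (x j i)).const_smul (lam j i)
    · exact fun _ => Or.inr hp.le⟩

lemma SS_apply (m₁ m₂ : ℕ) (x : Fin m₁ → Fin m₂ → ∀ k, X k) (lam : Fin m₁ → Fin m₂ → 𝕜)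
    (φ : MultBall 𝕜 X) :
    SS p hp m₁ m₂ x lam φ = blockVal p (fun v => φ.1 v) m₁ m₂ x lam := rfl

lemma SS_nonneg (m₁ m₂ : ℕ) (x : Fin m₁ → Fin m₂ → ∀ k, X k) (lam : Fin m₁ → Fin m₂ → 𝕜)
    (φ : MultBall 𝕜 X) : 0 ≤ SS p hp m₁ m₂ x lam φ :=
  blockVal_nonneg _ _ _ _ _ _

/-- The functions generating the convex cone used for separation. -/
def Ffun (m₁ m₂ : ℕ) (x : Fin m₁ → Fin m₂ → ∀ k, X k) (lam : Fin m₁ → Fin m₂ → 𝕜) :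
    C(MultBall 𝕜 X, ℝ) :=
  ContinuousMap.const _ (blockVal p (fun v => T v) m₁ m₂ x lam) -
    (C ^ p) • SS p hp m₁ m₂ x lam

lemma Ffun_apply (m₁ m₂ : ℕ) (x : Fin m₁ → Fin m₂ → ∀ k, X k) (lam : Fin m₁ → Fin m₂ → 𝕜)
    (φ : MultBall 𝕜 X) :
    Ffun p hp T C m₁ m₂ x lam φ = blockVal p (fun v => T v) m₁ m₂ x lam -
      C ^ p * blockVal p (fun v => φ.1 v) m₁ m₂ x lam := rfl

/-- The convex cone used in the separation argument. -/
def Fset : Set C(MultBall 𝕜 X, ℝ) :=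
  {h | ∃ m₁ m₂ x lam, h = Ffun p hp T C m₁ m₂ x lam}

lemma zero_mem_Fset : (0 : C(MultBall 𝕜 X, ℝ)) ∈ Fset p hp T C := by
  refine ⟨0, 0, fun j i => 0, fun j i => 0, ?_⟩
  ext φ
  simp [Ffun_apply, blockVal]

lemma smul_add_mem_Fset {fa fb : C(MultBall 𝕜 X, ℝ)} {t s : ℝ} (ht : 0 < t) (hs : 0 < s)
    (hfa : fa ∈ Fset p hp T C) (hfb : fb ∈ Fset p hp T C) :
    t • fa + s • fb ∈ Fset p hp T C := by
  obtain ⟨m₁a, m₂a, xa, lama, rfl⟩ := hfa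
  obtain ⟨m₁b, m₂b, xb, lamb, rfl⟩ := hfb
  set c : 𝕜 := ((t ^ (1 / p) : ℝ) : 𝕜) with hc
  set d : 𝕜 := ((s ^ (1 / p) : ℝ) : 𝕜) with hd
  have hnc : ‖c‖ ^ p = t := by
    rw [hc, RCLike.norm_ofReal, abs_of_nonneg (Real.rpow_nonneg ht.le _), one_div,
      Real.rpow_inv_rpow ht.le hp.ne']
  have hnd : ‖d‖ ^ p = s := by
    rw [hd, RCLike.norm_ofReal, abs_of_nonneg (Real.rpow_nonneg hs.le _), one_div,
      Real.rpow_inv_rpow hs.le hp.ne']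
  refine ⟨m₁a + m₁b, m₂a + m₂b, catx xa xb, catlam c d lama lamb, ?_⟩
  ext φ
  simp only [ContinuousMap.add_apply, ContinuousMap.smul_apply, Ffun_apply, smul_eq_mul]
  rw [blockVal_cat, blockVal_cat, hnc, hnd]
  ring

lemma smul_mem_Fset {fa : C(MultBall 𝕜 X, ℝ)} {t : ℝ} (ht : 0 < t)
    (hfa : fa ∈ Fset p hp T C) : t • fa ∈ Fset p hp T C := by
  have h := smul_add_mem_Fset p hp T C ht one_pos hfa (zero_mem_Fset p hp T C)
  simpa using h

lemma convex_Fset : Convex ℝ (Fset p hp T C) := by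
  intro f hf g hg a b ha hb hab
  rcases eq_or_lt_of_le ha with rfl | ha'
  · have hb1 : b = 1 := by linarith
    subst hb1
    simpa using hg
  rcases eq_or_lt_of_le hb with rfl | hb'
  · have ha1 : a = 1 := by linarith
    subst ha1
    simpa using hf
  exact smul_add_mem_Fset p hp T C ha' hb' hf hg

/-- The open convex set of everywhere-positive functions. -/
def Pset : Set C(MultBall 𝕜 X, ℝ) := {h | ∀ φ, 0 < h φ}

lemma convex_Pset : Convex ℝ (Pset (𝕜 := 𝕜) (X := X)) := by
  intro f hf g hg a b ha hb hab φ
  simp only [ContinuousMap.add_apply, ContinuousMap.smul_apply, smul_eq_mul]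
  rcases eq_or_lt_of_le ha with rfl | ha'
  · have hb1 : b = 1 := by linarith
    simp only [zero_mul, zero_add, hb1, one_mul]
    exact hg φ
  · have : 0 ≤ b * g φ := mul_nonneg hb (hg φ).le
    nlinarith [hf φ]

lemma isOpen_Pset : IsOpen (Pset (𝕜 := 𝕜) (X := X)) := by
  rw [Metric.isOpen_iff]
  intro h hh
  obtain ⟨φ₀, -, hmax⟩ := isCompact_univ.exists_isMinOn Set.univ_nonempty
    (h.continuous.continuousOn (s := Set.univ))
  refine ⟨h φ₀, hh φ₀, fun h' hdist φ => ?_⟩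
  have h1 : ‖h' - h‖ < h φ₀ := by rwa [← dist_eq_norm]
  have h2 : |h' φ - h φ| ≤ ‖h' - h‖ := by
    have := (h' - h).norm_coe_le_norm φ
    simpa [Real.norm_eq_abs] using this
  have h3 : h φ₀ ≤ h φ := hmax (Set.mem_univ φ)
  have := abs_le.mp h2
  linarith [this.1]

lemma one_mem_Pset : (1 : C(MultBall 𝕜 X, ℝ)) ∈ Pset (𝕜 := 𝕜) (X := X) :=
  fun φ => one_pos

end Cone


section Separation

variable [∀ k, CompleteSpace (X k)]
variable {p : ℝ} (hp : 0 < p) (T : ContinuousMultilinearMap 𝕜 X Y) {C : ℝ}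

lemma disjoint_Pset_Fset (hC : FactStronglySummingBound 𝕜 p T C) :
    Disjoint (Pset (𝕜 := 𝕜) (X := X)) (Fset p hp T C) := by
  rw [Set.disjoint_left]
  rintro h hP ⟨m₁, m₂, x, lam, rfl⟩
  obtain ⟨φ₀, -, hmax⟩ := isCompact_univ.exists_isMaxOn Set.univ_nonempty
    ((SS p hp m₁ m₂ x lam).continuous.continuousOn (s := Set.univ))
  have hfss := hC.2 m₁ m₂ x lam
  have hsup : (⨆ φ : {φ : ContinuousMultilinearMap 𝕜 X 𝕜 // ‖φ‖ ≤ 1},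
      (∑ j, ‖∑ i, lam j i • φ.1 (x j i)‖ ^ p) ^ (1 / p)) ≤
      (SS p hp m₁ m₂ x lam φ₀) ^ (1 / p) := by
    haveI : Nonempty {φ : ContinuousMultilinearMap 𝕜 X 𝕜 // ‖φ‖ ≤ 1} := ⟨⟨0, by simp⟩⟩
    refine ciSup_le (fun ψ => ?_)
    refine Real.rpow_le_rpow ?_ ?_ (by positivity)
    · exact Finset.sum_nonneg fun j _ => Real.rpow_nonneg (norm_nonneg _) p
    · exact hmax (Set.mem_univ (ψ : MultBall 𝕜 X))
  set A : ℝ := blockVal p (fun v => T v) m₁ m₂ x lam with hA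
  have hA0 : 0 ≤ A := blockVal_nonneg _ _ _ _ _ _
  have hS0 : 0 ≤ SS p hp m₁ m₂ x lam φ₀ := SS_nonneg _ _ _ _ _ _ _
  have h1 : A ^ (1 / p) ≤ C * (SS p hp m₁ m₂ x lam φ₀) ^ (1 / p) := by
    refine le_trans hfss ?_
    exact mul_le_mul_of_nonneg_left hsup hC.1
  have h2 : A ≤ C ^ p * SS p hp m₁ m₂ x lam φ₀ := by
    have := Real.rpow_le_rpow (Real.rpow_nonneg hA0 _) h1 hp.le
    rwa [one_div, Real.rpow_inv_rpow hA0 hp.ne',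
      Real.mul_rpow hC.1 (Real.rpow_nonneg hS0 _),
      Real.rpow_inv_rpow hS0 hp.ne'] at this
  have := hP φ₀
  rw [Ffun_apply] at this
  rw [SS_apply] at h2
  linarith

lemma exists_normalized_functional (hC : FactStronglySummingBound 𝕜 p T C) :
    ∃ Λ : C(MultBall 𝕜 X, ℝ) →L[ℝ] ℝ,
      (∀ f : C(MultBall 𝕜 X, ℝ), (∀ φ, 0 ≤ f φ) → 0 ≤ Λ f) ∧ Λ 1 = 1 ∧
      ∀ f ∈ Fset p hp T C, Λ f ≤ 0 := by
  obtain ⟨L, u, hLP, hLF⟩ := geometric_hahn_banach_open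
    (convex_Pset (𝕜 := 𝕜) (X := X)) isOpen_Pset (convex_Fset p hp T C)
    (disjoint_Pset_Fset hp T hC)
  have hLP0 : ∀ a ∈ Pset (𝕜 := 𝕜) (X := X), L a ≤ 0 := by
    intro a ha
    by_contra hlt
    push_neg at hlt
    set t : ℝ := (|u| + 1) / L a with htdef
    have ht : 0 < t := by positivity
    have hta : t • a ∈ Pset (𝕜 := 𝕜) (X := X) := by
      intro φ
      simp only [ContinuousMap.smul_apply, smul_eq_mul]
      exact mul_pos ht (ha φ)
    have := hLP _ hta
    rw [_root_.map_smul, smul_eq_mul, htdef, div_mul_cancel₀ _ hlt.ne'] at this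
    have := le_abs_self u
    linarith
  have hLF0 : ∀ b ∈ Fset p hp T C, 0 ≤ L b := by
    intro b hb
    by_contra hlt
    push_neg at hlt
    have hneg : 0 < -(L b) := by linarith
    set t : ℝ := (|u| + 1) / (-(L b)) with htdef
    have ht : 0 < t := div_pos (by positivity) hneg
    have htb := smul_mem_Fset p hp T C ht hb
    have hu := hLF _ htb
    rw [_root_.map_smul, smul_eq_mul] at hu
    have ht2 : t * (-(L b)) = |u| + 1 := div_mul_cancel₀ _ hneg.ne'
    rw [mul_neg] at ht2
    have := neg_abs_le u
    linarith
  set M : C(MultBall 𝕜 X, ℝ) →L[ℝ] ℝ := -L with hM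
  have hMF : ∀ b ∈ Fset p hp T C, M b ≤ 0 := by
    intro b hb
    simp only [hM, ContinuousLinearMap.neg_apply, neg_nonpos]
    exact hLF0 b hb
  have hM1nonneg : 0 ≤ M 1 := by
    simp only [hM, ContinuousLinearMap.neg_apply, le_neg]
    simpa using hLP0 1 one_mem_Pset
  have hMpos : ∀ f : C(MultBall 𝕜 X, ℝ), (∀ φ, 0 ≤ f φ) → 0 ≤ M f := by
    intro f hf
    refine le_of_forall_pos_le_add (fun ε hε => ?_)
    set δ : ℝ := ε / (M 1 + 1) with hδdef
    have hδ : 0 < δ := by positivity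
    have hmem : f + δ • 1 ∈ Pset (𝕜 := 𝕜) (X := X) := by
      intro φ
      simp only [ContinuousMap.add_apply, ContinuousMap.smul_apply, ContinuousMap.one_apply,
        smul_eq_mul, mul_one]
      have := hf φ
      linarith
    have h1 : 0 ≤ M (f + δ • 1) := by
      simp only [hM, ContinuousLinearMap.neg_apply, le_neg, neg_zero]
      exact hLP0 _ hmem
    rw [map_add, _root_.map_smul, smul_eq_mul] at h1
    have h2 : δ * M 1 ≤ ε := by
      have hε' : δ * (M 1 + 1) = ε := by
        rw [hδdef]; field_simp
      nlinarith
    linarith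
  have hM1 : 0 < M 1 := by
    rcases hM1nonneg.lt_or_eq with h | h
    · exact h
    · exfalso
      have hall : ∀ f : C(MultBall 𝕜 X, ℝ), M f = 0 := by
        intro f
        have ha : ∀ φ, 0 ≤ (‖f‖ • (1 : C(MultBall 𝕜 X, ℝ)) - f) φ := by
          intro φ
          simp only [ContinuousMap.sub_apply, ContinuousMap.smul_apply,
            ContinuousMap.one_apply, smul_eq_mul, mul_one, sub_nonneg]
          exact le_trans (le_abs_self _) (by simpa [Real.norm_eq_abs] using f.norm_coe_le_norm φ)
        have hb : ∀ φ, 0 ≤ (‖f‖ • (1 : C(MultBall 𝕜 X, ℝ)) + f) φ := by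
          intro φ
          simp only [ContinuousMap.add_apply, ContinuousMap.smul_apply,
            ContinuousMap.one_apply, smul_eq_mul, mul_one]
          have := abs_le.mp (by simpa [Real.norm_eq_abs] using f.norm_coe_le_norm φ)
          linarith [this.1]
        have h1 := hMpos _ ha
        have h2 := hMpos _ hb
        rw [map_sub, _root_.map_smul, smul_eq_mul, ← h] at h1
        rw [map_add, _root_.map_smul, smul_eq_mul, ← h] at h2
        simp only [mul_zero] at h1 h2
        linarith
      have h1 : L 1 = 0 := by
        have := hall 1
        simp only [hM, ContinuousLinearMap.neg_apply, neg_eq_zero] at this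
        exact this
      have h2 : u ≤ 0 := by
        have := hLF _ (zero_mem_Fset p hp T C)
        simpa using this
      have h3 := hLP _ (one_mem_Pset (𝕜 := 𝕜) (X := X))
      rw [h1] at h3
      linarith
  refine ⟨(M 1)⁻¹ • M, fun f hf => ?_, ?_, fun f hf => ?_⟩
  · simp only [ContinuousLinearMap.smul_apply, smul_eq_mul]
    exact mul_nonneg (inv_nonneg.mpr hM1.le) (hMpos f hf)
  · simp only [ContinuousLinearMap.smul_apply, smul_eq_mul]
    exact inv_mul_cancel₀ hM1.ne'
  · simp only [ContinuousLinearMap.smul_apply, smul_eq_mul]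
    exact mul_nonpos_of_nonneg_of_nonpos (inv_nonneg.mpr hM1.le) (hMF f hf)

end Separation


section FinalParts

variable [∀ k, CompleteSpace (X k)]

theorem forward {p C : ℝ} (hp1 : 1 ≤ p) (T : ContinuousMultilinearMap 𝕜 X Y)
    (hC : FactStronglySummingBound 𝕜 p T C) :
    ∃ μ : Measure (MultBall 𝕜 X), IsProbabilityMeasure μ ∧ μ.Regular ∧
      ∀ (m : ℕ) (lam : Fin m → 𝕜) (x : Fin m → ∀ k, X k),
        ‖∑ i, lam i • T (x i)‖ ≤
          C * (∫ φ : MultBall 𝕜 X, ‖∑ i, lam i • φ.1 (x i)‖ ^ p ∂μ) ^ (1 / p) := by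
  have hp : 0 < p := lt_of_lt_of_le one_pos hp1
  obtain ⟨Λ, hΛpos, hΛ1, hΛF⟩ := exists_normalized_functional hp T hC
  refine ⟨PietschRMK.rmkMeasure Λ hΛpos,
    PietschRMK.isProbability_rmkMeasure Λ hΛpos hΛ1, inferInstance, ?_⟩
  intro m lam x
  set μ := PietschRMK.rmkMeasure Λ hΛpos with hμ
  have hF := hΛF _ ⟨1, m, fun _ => x, fun _ => lam, rfl⟩
  set A : ℝ := blockVal p (fun v => T v) 1 m (fun _ => x) (fun _ => lam) with hA
  have hAval : A = ‖∑ i, lam i • T (x i)‖ ^ p := by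
    simp [hA, blockVal]
  have hconst : Λ (ContinuousMap.const (MultBall 𝕜 X) A) = A := by
    have h : ContinuousMap.const (MultBall 𝕜 X) A = A • (1 : C(MultBall 𝕜 X, ℝ)) := by
      ext φ; simp
    rw [h, _root_.map_smul, smul_eq_mul, hΛ1, mul_one]
  have hexp : Λ (Ffun p hp T C 1 m (fun _ => x) (fun _ => lam)) =
      A - C ^ p * Λ (SS p hp 1 m (fun _ => x) (fun _ => lam)) := by
    rw [Ffun, map_sub, hconst, _root_.map_smul, smul_eq_mul]
  have hSle := PietschRMK.le_integral Λ hΛpos hΛ1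
    (SS p hp 1 m (fun _ => x) (fun _ => lam))
    (fun φ => SS_nonneg p hp 1 m (fun _ => x) (fun _ => lam) φ)
  have hIcongr : (∫ φ, (SS p hp 1 m (fun _ => x) (fun _ => lam)) φ ∂μ) =
      ∫ φ : MultBall 𝕜 X, ‖∑ i, lam i • φ.1 (x i)‖ ^ p ∂μ := by
    refine integral_congr_ae (Filter.Eventually.of_forall (fun φ => ?_))
    simp [SS_apply, blockVal]
  set I : ℝ := ∫ φ : MultBall 𝕜 X, ‖∑ i, lam i • φ.1 (x i)‖ ^ p ∂μ with hI
  have hI0 : 0 ≤ I :=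
    integral_nonneg (fun φ => Real.rpow_nonneg (norm_nonneg _) p)
  have hmain : ‖∑ i, lam i • T (x i)‖ ^ p ≤ C ^ p * I := by
    rw [← hAval]
    have h1 : A ≤ C ^ p * Λ (SS p hp 1 m (fun _ => x) (fun _ => lam)) := by
      rw [hexp] at hF; linarith
    have h2 : Λ (SS p hp 1 m (fun _ => x) (fun _ => lam)) ≤ I := by
      rw [← hIcongr]; exact hSle
    calc A ≤ C ^ p * Λ (SS p hp 1 m (fun _ => x) (fun _ => lam)) := h1
      _ ≤ C ^ p * I := mul_le_mul_of_nonneg_left h2 (Real.rpow_nonneg hC.1 p)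
  have hfinal := Real.rpow_le_rpow (Real.rpow_nonneg (norm_nonneg _) p) hmain
    (by positivity : (0:ℝ) ≤ 1 / p)
  rwa [one_div, Real.rpow_rpow_inv (norm_nonneg _) hp.ne',
    Real.mul_rpow (Real.rpow_nonneg hC.1 p) hI0,
    Real.rpow_rpow_inv hC.1 hp.ne', ← one_div] at hfinal

theorem backward {p C : ℝ} (hp1 : 1 ≤ p) (hC0 : 0 ≤ C)
    (T : ContinuousMultilinearMap 𝕜 X Y) (μ : Measure (MultBall 𝕜 X))
    (hprob : IsProbabilityMeasure μ)
    (hdom : ∀ (m : ℕ) (lam : Fin m → 𝕜) (x : Fin m → ∀ k, X k),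
      ‖∑ i, lam i • T (x i)‖ ≤
        C * (∫ φ : MultBall 𝕜 X, ‖∑ i, lam i • φ.1 (x i)‖ ^ p ∂μ) ^ (1 / p)) :
    FactStronglySummingBound 𝕜 p T C := by
  have hp : 0 < p := lt_of_lt_of_le one_pos hp1
  haveI := hprob
  refine ⟨hC0, fun m₁ m₂ x lam => ?_⟩
  have hcontj : ∀ j : Fin m₁,
      Continuous (fun φ : MultBall 𝕜 X => ‖∑ i, lam j i • φ.1 (x j i)‖ ^ p) := by
    intro j
    apply Continuous.rpow_const
    · apply Continuous.norm
      apply continuous_finset_sum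
      intro i _
      exact (MultBall.continuous_eval (x j i)).const_smul (lam j i)
    · exact fun _ => Or.inr hp.le
  have hintj : ∀ j : Fin m₁,
      Integrable (fun φ : MultBall 𝕜 X => ‖∑ i, lam j i • φ.1 (x j i)‖ ^ p) μ :=
    fun j => (hcontj j).integrable_of_hasCompactSupport (HasCompactSupport.of_compactSpace _)
  set g : MultBall 𝕜 X → ℝ := fun φ => ∑ j, ‖∑ i, lam j i • φ.1 (x j i)‖ ^ p with hg
  have hgcont : Continuous g := continuous_finset_sum _ (fun j _ => hcontj j)
  have hgint : Integrable g μ :=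
    hgcont.integrable_of_hasCompactSupport (HasCompactSupport.of_compactSpace _)
  have hg0 : ∀ φ, 0 ≤ g φ :=
    fun φ => Finset.sum_nonneg (fun j _ => Real.rpow_nonneg (norm_nonneg _) p)
  -- step 1: pointwise domination for each row
  have h1 : ∀ j : Fin m₁, ‖∑ i, lam j i • T (x j i)‖ ^ p ≤
      C ^ p * ∫ φ : MultBall 𝕜 X, ‖∑ i, lam j i • φ.1 (x j i)‖ ^ p ∂μ := by
    intro j
    have hd := hdom m₂ (lam j) (x j)
    have h0 : 0 ≤ ∫ φ : MultBall 𝕜 X, ‖∑ i, lam j i • φ.1 (x j i)‖ ^ p ∂μ :=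
      integral_nonneg (fun φ => Real.rpow_nonneg (norm_nonneg _) p)
    have h2 := Real.rpow_le_rpow (norm_nonneg _) hd hp.le
    rwa [Real.mul_rpow hC0 (Real.rpow_nonneg h0 _), one_div,
      Real.rpow_inv_rpow h0 hp.ne'] at h2
  -- step 2: sum the rows
  have h2 : (∑ j, ‖∑ i, lam j i • T (x j i)‖ ^ p) ≤ C ^ p * ∫ φ, g φ ∂μ := by
    calc (∑ j, ‖∑ i, lam j i • T (x j i)‖ ^ p)
        ≤ ∑ j, C ^ p * ∫ φ : MultBall 𝕜 X, ‖∑ i, lam j i • φ.1 (x j i)‖ ^ p ∂μ :=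
          Finset.sum_le_sum (fun j _ => h1 j)
      _ = C ^ p * ∑ j, ∫ φ : MultBall 𝕜 X, ‖∑ i, lam j i • φ.1 (x j i)‖ ^ p ∂μ :=
          (Finset.mul_sum _ _ _).symm
      _ = C ^ p * ∫ φ, g φ ∂μ := by
          rw [← integral_finset_sum _ (fun j _ => hintj j)]
  -- step 3: maximize over the compact ball
  obtain ⟨φ₀, -, hmax⟩ := isCompact_univ.exists_isMaxOn Set.univ_nonempty
    (hgcont.continuousOn (s := Set.univ))
  have h3 : ∫ φ, g φ ∂μ ≤ g φ₀ := by
    calc ∫ φ, g φ ∂μ ≤ ∫ _φ, g φ₀ ∂μ :=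
          integral_mono hgint (integrable_const _) (fun φ => hmax (Set.mem_univ φ))
      _ = g φ₀ := by simp
  have h4 : (∑ j, ‖∑ i, lam j i • T (x j i)‖ ^ p) ≤ C ^ p * g φ₀ :=
    h2.trans (mul_le_mul_of_nonneg_left h3 (Real.rpow_nonneg hC0 p))
  -- step 4: pass to the 1/p power and compare with the supremum
  have h5 := Real.rpow_le_rpow (Finset.sum_nonneg
    (fun j _ => Real.rpow_nonneg (norm_nonneg _) p)) h4 (by positivity : (0:ℝ) ≤ 1 / p)
  rw [Real.mul_rpow (Real.rpow_nonneg hC0 p) (hg0 φ₀), one_div,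
    Real.rpow_rpow_inv hC0 hp.ne'] at h5
  rw [← one_div] at h5
  refine h5.trans ?_
  refine mul_le_mul_of_nonneg_left ?_ hC0
  have hbdd : BddAbove (Set.range (fun ψ : {φ : ContinuousMultilinearMap 𝕜 X 𝕜 // ‖φ‖ ≤ 1} =>
      (∑ j, ‖∑ i, lam j i • ψ.1 (x j i)‖ ^ p) ^ (1 / p))) := by
    refine ⟨(g φ₀) ^ (1 / p), ?_⟩
    rintro - ⟨ψ, rfl⟩
    refine Real.rpow_le_rpow ?_ (hmax (Set.mem_univ (ψ : MultBall 𝕜 X))) (by positivity)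
    exact Finset.sum_nonneg (fun j _ => Real.rpow_nonneg (norm_nonneg _) p)
  exact le_ciSup hbdd (⟨φ₀.1, φ₀.2⟩ : {φ : ContinuousMultilinearMap 𝕜 X 𝕜 // ‖φ‖ ≤ 1})

end FinalParts

end PietschMain

end
end MainProof
/-- Pietsch-Domination type theorem: `T` is factorable strongly
`p`-summing iff there are `C ≥ 0` and a regular Borel probability measure `μ` on the
unit ball of the continuous `n`-linear functionals (with the topology of pointwise
convergence) dominating `T` in the sense below. -/
theorem factStronglySumming_iff_domination
    {Y : Type*} [∀ k, CompleteSpace (X k)]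
    [NormedAddCommGroup Y] [NormedSpace 𝕜 Y] [CompleteSpace Y]
    (p : ℝ) (hp : 1 ≤ p) (T : ContinuousMultilinearMap 𝕜 X Y) :
    FactStronglySumming 𝕜 p T ↔
      ∃ C : ℝ, 0 ≤ C ∧ ∃ μ : Measure (MultBall 𝕜 X), IsProbabilityMeasure μ ∧ μ.Regular ∧
        ∀ (m : ℕ) (lam : Fin m → 𝕜) (x : Fin m → ∀ k, X k),
          ‖∑ i, lam i • T (x i)‖ ≤
            C * (∫ φ : MultBall 𝕜 X, ‖∑ i, lam i • φ.1 (x i)‖ ^ p ∂μ) ^ (1 / p) := by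
  constructor
  · rintro ⟨C, hC⟩
    obtain ⟨μ, hprob, hreg, hdom⟩ := PietschMain.forward hp T hC
    exact ⟨C, hC.1, μ, hprob, hreg, hdom⟩
  · rintro ⟨C, hC0, μ, hprob, hreg, hdom⟩
    exact ⟨C, PietschMain.backward hp hC0 T μ hprob hdom⟩
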